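/- For any two policies π_U and π in a discounted MDP, the difference of expected discounted returns satisfies J(π_U) = J(π) + E_{τ∼π_U}[ Σ_{t=0}^∞ γ^t A^π(s_t, a_t) ], where A^π(s,a) = Q^π(s,a) − V^π(s) is the advantage function of π. -/

import Mathlib

private lemma pdl_step_sum {S A : Type} [Fintype S] [Fintype A]
    (dd : S → ℝ) (πU : S → A → ℝ) (T : S → A → S → ℝ)
    (r : S → A → ℝ) (γ : ℝ) (f : S → ℝ) :
    ∑ s, dd s * ∑ a, πU s a * (r s a + γ * ∑ s', T s a s' * f s')
      = (∑ s, ∑ a, dd s * πU s a * r s a)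
        + γ * ∑ s', (∑ s, ∑ a, dd s * πU s a * T s a s') * f s' := by
  have h1 : ∀ s, dd s * ∑ a, πU s a * (r s a + γ * ∑ s', T s a s' * f s')
      = (∑ a, dd s * πU s a * r s a)
        + ∑ a, ∑ s', γ * (dd s * πU s a * T s a s' * f s') := by
    intro s
    rw [Finset.mul_sum, ← Finset.sum_add_distrib]
    refine Finset.sum_congr rfl fun a _ => ?_
    calc dd s * (πU s a * (r s a + γ * ∑ s', T s a s' * f s'))
        = dd s * πU s a * r s a + dd s * πU s a * γ * ∑ s', T s a s' * f s' := by ring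
      _ = dd s * πU s a * r s a + ∑ s', γ * (dd s * πU s a * T s a s' * f s') := by
          rw [Finset.mul_sum]
          congr 1
          exact Finset.sum_congr rfl fun s' _ => by ring
  have h2 : γ * ∑ s', (∑ s, ∑ a, dd s * πU s a * T s a s') * f s'
      = ∑ s, ∑ a, ∑ s', γ * (dd s * πU s a * T s a s' * f s') := by
    rw [Finset.mul_sum]
    calc ∑ s', γ * ((∑ s, ∑ a, dd s * πU s a * T s a s') * f s')
        = ∑ s', ∑ s, ∑ a, γ * (dd s * πU s a * T s a s' * f s') := by
          refine Finset.sum_congr rfl fun s' _ => ?_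
          simp only [Finset.sum_mul, Finset.mul_sum]
      _ = ∑ s, ∑ s', ∑ a, γ * (dd s * πU s a * T s a s' * f s') := Finset.sum_comm
      _ = ∑ s, ∑ a, ∑ s', γ * (dd s * πU s a * T s a s' * f s') :=
          Finset.sum_congr rfl fun s _ => Finset.sum_comm
  simp only [h1, Finset.sum_add_distrib, h2]

theorem performance_difference
    {S A : Type} [Fintype S] [Fintype A]
    (T : S → A → S → ℝ) (r : S → A → ℝ) (ρ : S → ℝ) (γ : ℝ)
    (hγ0 : 0 < γ) (hγ1 : γ < 1)
    (hT0 : ∀ s a s', 0 ≤ T s a s') (hT1 : ∀ s a, ∑ s', T s a s' = 1)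
    (hρ0 : ∀ s, 0 ≤ ρ s) (hρ1 : ∑ s, ρ s = 1)
    (πU π : S → A → ℝ)
    (hπU0 : ∀ s a, 0 ≤ πU s a) (hπU1 : ∀ s, ∑ a, πU s a = 1)
    (hπ0 : ∀ s a, 0 ≤ π s a) (hπ1 : ∀ s, ∑ a, π s a = 1)
    (VU V : S → ℝ)
    (hVU : ∀ s, VU s = ∑ a, πU s a * (r s a + γ * ∑ s', T s a s' * VU s'))
    (hV : ∀ s, V s = ∑ a, π s a * (r s a + γ * ∑ s', T s a s' * V s'))
    (Q : S → A → ℝ)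
    (hQ : ∀ s a, Q s a = r s a + γ * ∑ s', T s a s' * V s')
    (d : ℕ → S → ℝ)
    (hd0 : ∀ s, d 0 s = ρ s)
    (hds : ∀ t s', d (t + 1) s' = ∑ s, ∑ a, d t s * πU s a * T s a s') :
    (∑ s, ρ s * VU s) =
      (∑ s, ρ s * V s) +
        ∑' t : ℕ, γ ^ t * ∑ s, ∑ a, d t s * πU s a * (Q s a - V s) := by
  -- nonnegativity and normalization of d
  have dpos : ∀ t s, 0 ≤ d t s := by
    intro t
    induction t with
    | zero => intro s; rw [hd0]; exact hρ0 s
    | succ t ih =>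
        intro s'
        rw [hds]
        refine Finset.sum_nonneg fun s _ => Finset.sum_nonneg fun a _ => ?_
        exact mul_nonneg (mul_nonneg (ih s) (hπU0 s a)) (hT0 s a s')
  have dsum : ∀ t, ∑ s, d t s = 1 := by
    intro t
    induction t with
    | zero => simp [hd0, hρ1]
    | succ t ih =>
        have : ∑ s', d (t+1) s' = ∑ s, ∑ a, d t s * πU s a := by
          simp only [hds]
          rw [Finset.sum_comm]
          refine Finset.sum_congr rfl fun s _ => ?_
          rw [Finset.sum_comm]
          refine Finset.sum_congr rfl fun a _ => ?_
          rw [← Finset.mul_sum, hT1, mul_one]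
        rw [this]
        have : ∀ s : S, ∑ a, d t s * πU s a = d t s := by
          intro s; rw [← Finset.mul_sum, hπU1, mul_one]
        simp only [this, ih]
  -- abbreviations
  set R : ℕ → ℝ := fun t => γ ^ t * ∑ s, ∑ a, d t s * πU s a * r s a with hR
  set W : ℕ → ℝ := fun t => γ ^ t * ∑ s, d t s * V s with hW
  set U : ℕ → ℝ := fun t => γ ^ t * ∑ s, d t s * VU s with hU
  set aa : ℕ → ℝ := fun t => γ ^ t * ∑ s, ∑ a, d t s * πU s a * (Q s a - V s) with haa
  -- key recursions
  have key1 : ∀ t, U t = R t + U (t + 1) := by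
    intro t
    have h := pdl_step_sum (d t) πU T r γ VU
    have h2 : ∑ s, d t s * VU s
        = (∑ s, ∑ a, d t s * πU s a * r s a) + γ * ∑ s', d (t+1) s' * VU s' := by
      calc ∑ s, d t s * VU s
          = ∑ s, d t s * ∑ a, πU s a * (r s a + γ * ∑ s', T s a s' * VU s') := by
            refine Finset.sum_congr rfl fun s _ => by rw [← hVU]
        _ = (∑ s, ∑ a, d t s * πU s a * r s a)
            + γ * ∑ s', (∑ s, ∑ a, d t s * πU s a * T s a s') * VU s' := h
        _ = (∑ s, ∑ a, d t s * πU s a * r s a) + γ * ∑ s', d (t+1) s' * VU s' := by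
            congr 1
            rw [mul_eq_mul_left_iff]
            left
            exact Finset.sum_congr rfl fun s' _ => by rw [← hds]
    simp only [hU, hR, h2]
    rw [pow_succ]
    ring
  have key2 : ∀ t, aa t = R t + W (t + 1) - W t := by
    intro t
    have h := pdl_step_sum (d t) πU T r γ V
    have hQV : ∀ s, (∑ a, d t s * πU s a * (Q s a - V s))
        = d t s * (∑ a, πU s a * (r s a + γ * ∑ s', T s a s' * V s')) - d t s * V s := by
      intro s
      have hA : d t s * V s = ∑ a, d t s * πU s a * V s := by
        rw [← Finset.sum_mul, ← Finset.mul_sum, hπU1, mul_one]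
      rw [Finset.mul_sum, hA, ← Finset.sum_sub_distrib]
      refine Finset.sum_congr rfl fun a _ => ?_
      rw [hQ]
      ring
    have h2 : ∑ s, ∑ a, d t s * πU s a * (Q s a - V s)
        = ((∑ s, ∑ a, d t s * πU s a * r s a)
            + γ * ∑ s', d (t+1) s' * V s') - ∑ s, d t s * V s := by
      simp only [hQV, Finset.sum_sub_distrib]
      congr 1
      rw [h]
      congr 1
      rw [mul_eq_mul_left_iff]
      left
      exact Finset.sum_congr rfl fun s' _ => by rw [← hds]
    simp only [haa, hR, hW, h2]
    rw [pow_succ]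
    ring
  -- telescoping partial sums
  have tele : ∀ N, ∑ t ∈ Finset.range N, aa t = (U 0 - U N) + (W N - W 0) := by
    intro N
    induction N with
    | zero => simp
    | succ N ih =>
        rw [Finset.sum_range_succ, ih, key2 N]
        have := key1 N
        linarith
  -- bounds
  have MQdef : ∀ t, |aa t| ≤ (∑ s, ∑ a, |Q s a - V s|) * γ ^ t := by
    intro t
    have hb : |∑ s, ∑ a, d t s * πU s a * (Q s a - V s)| ≤ ∑ s, ∑ a, |Q s a - V s| := by
      calc |∑ s, ∑ a, d t s * πU s a * (Q s a - V s)|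
          ≤ ∑ s, ∑ a, |d t s * πU s a * (Q s a - V s)| := by
            refine (Finset.abs_sum_le_sum_abs _ _).trans ?_
            exact Finset.sum_le_sum fun s _ => Finset.abs_sum_le_sum_abs _ _
        _ ≤ ∑ s, ∑ a, |Q s a - V s| := by
            refine Finset.sum_le_sum fun s _ => Finset.sum_le_sum fun a _ => ?_
            rw [abs_mul, abs_mul]
            have h1 : |d t s| ≤ 1 := by
              rw [abs_of_nonneg (dpos t s)]
              calc d t s ≤ ∑ s', d t s' :=
                    Finset.single_le_sum (fun s' _ => dpos t s') (Finset.mem_univ s)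
                _ = 1 := dsum t
            have h2 : |πU s a| ≤ 1 := by
              rw [abs_of_nonneg (hπU0 s a)]
              calc πU s a ≤ ∑ a', πU s a' :=
                    Finset.single_le_sum (fun a' _ => hπU0 s a') (Finset.mem_univ a)
                _ = 1 := hπU1 s
            calc |d t s| * |πU s a| * |Q s a - V s|
                ≤ 1 * 1 * |Q s a - V s| := by
                  gcongr
              _ = |Q s a - V s| := by ring
    simp only [haa, abs_mul, abs_pow, abs_of_pos hγ0]
    calc γ ^ t * |∑ s, ∑ a, d t s * πU s a * (Q s a - V s)|
        ≤ γ ^ t * (∑ s, ∑ a, |Q s a - V s|) := by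
          exact mul_le_mul_of_nonneg_left hb (pow_nonneg hγ0.le t)
      _ = (∑ s, ∑ a, |Q s a - V s|) * γ ^ t := by ring
  have hsum : Summable aa := by
    refine Summable.of_abs ?_
    refine Summable.of_nonneg_of_le (fun t => abs_nonneg _) MQdef ?_
    exact (summable_geometric_of_lt_one hγ0.le hγ1).mul_left _
  -- W N → 0 and U N → 0
  have hgeo : Filter.Tendsto (fun n : ℕ => γ ^ n) Filter.atTop (nhds 0) :=
    tendsto_pow_atTop_nhds_zero_of_lt_one hγ0.le hγ1
  have vanish : ∀ (f : S → ℝ),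
      Filter.Tendsto (fun n : ℕ => γ ^ n * ∑ s, d n s * f s) Filter.atTop (nhds 0) := by
    intro f
    have hb : ∀ n : ℕ, |γ ^ n * ∑ s, d n s * f s| ≤ (∑ s, |f s|) * γ ^ n := by
      intro n
      rw [abs_mul, abs_pow, abs_of_pos hγ0]
      calc γ ^ n * |∑ s, d n s * f s|
          ≤ γ ^ n * ∑ s, |f s| := by
            refine mul_le_mul_of_nonneg_left ?_ (pow_nonneg hγ0.le n)
            refine (Finset.abs_sum_le_sum_abs _ _).trans ?_
            refine Finset.sum_le_sum fun s _ => ?_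
            rw [abs_mul, abs_of_nonneg (dpos n s)]
            have h1 : d n s ≤ 1 := by
              calc d n s ≤ ∑ s', d n s' :=
                    Finset.single_le_sum (fun s' _ => dpos n s') (Finset.mem_univ s)
                _ = 1 := dsum n
            calc d n s * |f s| ≤ 1 * |f s| := by gcongr
              _ = |f s| := one_mul _
        _ = (∑ s, |f s|) * γ ^ n := by ring
    have h0 : Filter.Tendsto (fun n : ℕ => (∑ s, |f s|) * γ ^ n) Filter.atTop (nhds 0) := by
      simpa using hgeo.const_mul (∑ s, |f s|)
    exact squeeze_zero_norm hb h0
  have hWlim : Filter.Tendsto W Filter.atTop (nhds 0) := vanish V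
  have hUlim : Filter.Tendsto U Filter.atTop (nhds 0) := vanish VU
  -- partial sums tend to U 0 - W 0
  have hplim : Filter.Tendsto (fun N => ∑ t ∈ Finset.range N, aa t)
      Filter.atTop (nhds (U 0 - W 0)) := by
    have : Filter.Tendsto (fun N => (U 0 - U N) + (W N - W 0)) Filter.atTop
        (nhds ((U 0 - 0) + (0 - W 0))) := by
      exact ((tendsto_const_nhds.sub hUlim).add (hWlim.sub tendsto_const_nhds))
    simpa [tele, ← sub_eq_add_neg] using this
  have htsum : ∑' t, aa t = U 0 - W 0 := by
    have := hsum.hasSum.tendsto_sum_nat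
    exact tendsto_nhds_unique this hplim
  have hU0 : U 0 = ∑ s, ρ s * VU s := by
    simp [hU, hd0]
  have hW0 : W 0 = ∑ s, ρ s * V s := by
    simp [hW, hd0]
  have goal : (∑ s, ρ s * VU s) = (∑ s, ρ s * V s) + ∑' t, aa t := by
    rw [htsum, hU0, hW0]; ring
  exact goal
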